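/- Cholesky update under row/column augmentation: let Σ = [[Σ₁₁, Σ₁₂],[Σ₂₁, Σ₂₂]] have Cholesky factor L = [[A,0],[B,C]], and let the augmented matrix Σ̄ be obtained by inserting a middle block row/column (σ₁, σ, σ₂) so that Σ̄ = [[Σ₁₁, σ₁, Σ₁₂],[σ₁ᵀ, σ, σ₂ᵀ],[Σ₂₁, σ₂, Σ₂₂]] is positive definite. Then the Cholesky factor L̄ = [[Ā,0,0],[ā, b̄, 0],[B̄, c̄, C̄]] of Σ̄ satisfies Ā = A, B̄ = B, ā = (A⁻¹σ₁)ᵀ, b̄ b̄ᵀ = σ − ā āᵀ, c̄ = (b̄⁻¹(σ₂ᵀ − ā Bᵀ))ᵀ, and C̄ C̄ᵀ = C Cᵀ − c̄ c̄ᵀ. -/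

import Mathlib

open Matrix

section chol
variable {n : ℕ}

lemma lt_det_triangular (L : Matrix (Fin n) (Fin n) ℝ)
    (htri : ∀ i j : Fin n, i < j → L i j = 0) (hdiag : ∀ i : Fin n, 0 < L i i) :
    0 < L.det := by
  rw [Matrix.det_of_lowerTriangular L (fun i j h => htri i j h)]
  exact Finset.prod_pos fun i _ => hdiag i

lemma chol_unique (L₁ L₂ : Matrix (Fin n) (Fin n) ℝ)
    (h1 : ∀ i j : Fin n, i < j → L₁ i j = 0) (d1 : ∀ i : Fin n, 0 < L₁ i i)
    (h2 : ∀ i j : Fin n, i < j → L₂ i j = 0) (d2 : ∀ i : Fin n, 0 < L₂ i i)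
    (heq : L₁ * L₁ᵀ = L₂ * L₂ᵀ) : L₁ = L₂ := by
  have hbt1 : L₁.BlockTriangular OrderDual.toDual := fun i j h => h1 i j h
  have hbt2 : L₂.BlockTriangular OrderDual.toDual := fun i j h => h2 i j h
  have hu1 : IsUnit L₁.det := (lt_det_triangular L₁ h1 d1).ne'.isUnit
  have hu2 : IsUnit L₂.det := (lt_det_triangular L₂ h2 d2).ne'.isUnit
  have hu1T : IsUnit L₁ᵀ.det := by rwa [Matrix.det_transpose]
  have hu2T : IsUnit L₂ᵀ.det := by rwa [Matrix.det_transpose]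
  haveI i1 : Invertible L₁ := L₁.invertibleOfIsUnitDet hu1
  haveI i2 : Invertible L₂ := L₂.invertibleOfIsUnitDet hu2
  haveI i1T : Invertible L₁ᵀ := L₁ᵀ.invertibleOfIsUnitDet hu1T
  set D := L₂⁻¹ * L₁ with hD
  have hlow : D.BlockTriangular OrderDual.toDual :=
    (Matrix.blockTriangular_inv_of_blockTriangular hbt2).mul hbt1
  have hDalt : D = L₂ᵀ * (L₁ᵀ)⁻¹ := by
    calc D = L₂⁻¹ * (L₁ * L₁ᵀ * (L₁ᵀ)⁻¹) := by
            rw [Matrix.mul_nonsing_inv_cancel_right _ _ hu1T]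
      _ = L₂⁻¹ * (L₂ * L₂ᵀ * (L₁ᵀ)⁻¹) := by rw [heq]
      _ = L₂ᵀ * (L₁ᵀ)⁻¹ := by
            rw [Matrix.mul_assoc L₂, Matrix.nonsing_inv_mul_cancel_left _ _ hu2]
  have hup : D.BlockTriangular id := by
    rw [hDalt]
    exact (hbt2.transpose).mul (Matrix.blockTriangular_inv_of_blockTriangular hbt1.transpose)
  have hdiagD : ∀ i j : Fin n, i ≠ j → D i j = 0 := by
    intro i j hij
    rcases lt_or_gt_of_ne hij with h | h
    · exact hlow h
    · exact hup h
  have hDDT : D * Dᵀ = 1 := by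
    rw [hD, Matrix.transpose_mul, Matrix.transpose_nonsing_inv]
    calc L₂⁻¹ * L₁ * (L₁ᵀ * (L₂ᵀ)⁻¹) = L₂⁻¹ * (L₁ * L₁ᵀ) * (L₂ᵀ)⁻¹ := by
          simp only [Matrix.mul_assoc]
      _ = L₂⁻¹ * (L₂ * L₂ᵀ) * (L₂ᵀ)⁻¹ := by rw [heq]
      _ = 1 := by
          rw [← Matrix.mul_assoc, Matrix.nonsing_inv_mul _ hu2, Matrix.one_mul,
            Matrix.mul_nonsing_inv _ hu2T]
  have hL1 : L₂ * D = L₁ := by rw [hD, Matrix.mul_nonsing_inv_cancel_left _ _ hu2]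
  have hDpos : ∀ i : Fin n, 0 < D i i := by
    intro i
    have : L₁ i i = L₂ i i * D i i := by
      rw [← hL1, Matrix.mul_apply]
      rw [Finset.sum_eq_single_of_mem i (Finset.mem_univ i)]
      intro b _ hb
      rw [hdiagD b i hb, mul_zero]
    nlinarith [d1 i, d2 i]
  have hDone : D = 1 := by
    ext i j
    by_cases hij : i = j
    · subst hij
      have h0 := congrFun (congrFun hDDT i) i
      rw [Matrix.mul_apply] at h0
      rw [Finset.sum_eq_single_of_mem i (Finset.mem_univ i)
        (fun b _ hb => by rw [hdiagD i b (fun e => hb e.symm), zero_mul])] at h0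
      simp only [Matrix.transpose_apply, Matrix.one_apply_eq] at h0
      simp only [Matrix.one_apply_eq]
      nlinarith [hDpos i]
    · rw [hdiagD i j hij, Matrix.one_apply_ne hij]
  rw [← hL1, hDone, Matrix.mul_one]

end chol

/-- Cholesky update under inserting a middle block row/column. If
`Σ = [[Σ₁₁,Σ₁₂],[Σ₂₁,Σ₂₂]]` has Cholesky factor `L = [[A,0],[B,C]]` and the positive-definite
augmented matrix `Σ̄ = [[Σ₁₁,σ₁,Σ₁₂],[σ₁ᵀ,σ,σ₂ᵀ],[Σ₂₁,σ₂,Σ₂₂]]` has Cholesky factor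
`L̄ = [[Ā,0,0],[ā,b̄,0],[B̄,c̄,C̄]]` (all diagonal block factors lower triangular with positive
diagonals), then `Ā = A`, `B̄ = B`, `ā = (A⁻¹σ₁)ᵀ`, `b̄ b̄ᵀ = σ − ā āᵀ`,
`c̄ = (b̄⁻¹(σ₂ᵀ − ā Bᵀ))ᵀ` and `C̄ C̄ᵀ = C Cᵀ − c̄ c̄ᵀ`. -/


theorem stmt12 (p q r : ℕ)
    (S11 : Matrix (Fin p) (Fin p) ℝ) (S12 : Matrix (Fin p) (Fin r) ℝ)
    (S21 : Matrix (Fin r) (Fin p) ℝ) (S22 : Matrix (Fin r) (Fin r) ℝ)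
    (s1 : Matrix (Fin p) (Fin q) ℝ) (s0 : Matrix (Fin q) (Fin q) ℝ)
    (s2 : Matrix (Fin r) (Fin q) ℝ)
    (A Abar : Matrix (Fin p) (Fin p) ℝ) (B Bbar : Matrix (Fin r) (Fin p) ℝ)
    (C Cbar : Matrix (Fin r) (Fin r) ℝ)
    (abar : Matrix (Fin q) (Fin p) ℝ) (bbar : Matrix (Fin q) (Fin q) ℝ)
    (cbar : Matrix (Fin r) (Fin q) ℝ)
    (hAtri : ∀ i j : Fin p, i < j → A i j = 0) (hAdiag : ∀ i : Fin p, 0 < A i i)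
    (hCtri : ∀ i j : Fin r, i < j → C i j = 0) (hCdiag : ∀ i : Fin r, 0 < C i i)
    (hAbtri : ∀ i j : Fin p, i < j → Abar i j = 0) (hAbdiag : ∀ i : Fin p, 0 < Abar i i)
    (hbbtri : ∀ i j : Fin q, i < j → bbar i j = 0) (hbbdiag : ∀ i : Fin q, 0 < bbar i i)
    (hCbtri : ∀ i j : Fin r, i < j → Cbar i j = 0) (hCbdiag : ∀ i : Fin r, 0 < Cbar i i)
    (hPD : (Matrix.fromBlocks S11 (Matrix.fromCols s1 S12)
              (Matrix.fromRows s1ᵀ S21)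
              (Matrix.fromBlocks s0 s2ᵀ s2 S22)).PosDef)
    (hL : Matrix.fromBlocks A 0 B C * (Matrix.fromBlocks A 0 B C)ᵀ
            = Matrix.fromBlocks S11 S12 S21 S22)
    (hLbar : Matrix.fromBlocks Abar 0 (Matrix.fromRows abar Bbar)
                (Matrix.fromBlocks bbar 0 cbar Cbar) *
              (Matrix.fromBlocks Abar 0 (Matrix.fromRows abar Bbar)
                (Matrix.fromBlocks bbar 0 cbar Cbar))ᵀ
            = Matrix.fromBlocks S11 (Matrix.fromCols s1 S12)
                (Matrix.fromRows s1ᵀ S21)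
                (Matrix.fromBlocks s0 s2ᵀ s2 S22)) :
    Abar = A ∧ Bbar = B ∧ abar = (A⁻¹ * s1)ᵀ ∧ bbar * bbarᵀ = s0 - abar * abarᵀ ∧
      cbar = (bbar⁻¹ * (s2ᵀ - abar * Bᵀ))ᵀ ∧ Cbar * Cbarᵀ = C * Cᵀ - cbar * cbarᵀ := by
  have hL' := hL
  rw [Matrix.fromBlocks_transpose, Matrix.fromBlocks_multiply] at hL'
  simp only [Matrix.mul_zero, Matrix.zero_mul, add_zero, zero_add,
    Matrix.transpose_zero] at hL'
  have hS11 : A * Aᵀ = S11 := by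
    have := congrArg Matrix.toBlocks₁₁ hL'
    simpa [Matrix.toBlocks_fromBlocks₁₁] using this
  have hS12 : A * Bᵀ = S12 := by
    have := congrArg Matrix.toBlocks₁₂ hL'
    simpa [Matrix.toBlocks_fromBlocks₁₂] using this
  have hS22 : B * Bᵀ + C * Cᵀ = S22 := by
    have := congrArg Matrix.toBlocks₂₂ hL'
    simpa [Matrix.toBlocks_fromBlocks₂₂] using this
  have hLb := hLbar
  simp only [Matrix.fromBlocks_transpose, Matrix.transpose_fromRows,
    Matrix.fromBlocks_multiply, Matrix.fromRows_mul, Matrix.mul_fromCols,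
    Matrix.fromRows_mul_fromCols, Matrix.transpose_zero, Matrix.mul_zero,
    Matrix.zero_mul, add_zero, zero_add, Matrix.fromBlocks_add] at hLb
  have hb11 : Abar * Abarᵀ = S11 := by
    have := congrArg Matrix.toBlocks₁₁ hLb
    simpa [Matrix.toBlocks_fromBlocks₁₁] using this
  have hb12 := congrArg Matrix.toBlocks₁₂ hLb
  simp only [Matrix.toBlocks_fromBlocks₁₂] at hb12
  have hb12a : Abar * abarᵀ = s1 := by
    have := congrArg Matrix.toCols₁ hb12
    simpa [Matrix.toCols₁_fromCols] using this
  have hb12b : Abar * Bbarᵀ = S12 := by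
    have := congrArg Matrix.toCols₂ hb12
    simpa [Matrix.toCols₂_fromCols] using this
  have hb22 := congrArg Matrix.toBlocks₂₂ hLb
  simp only [Matrix.toBlocks_fromBlocks₂₂] at hb22
  have e11 : abar * abarᵀ + bbar * bbarᵀ = s0 := by
    have := congrArg Matrix.toBlocks₁₁ hb22
    simpa [Matrix.fromBlocks_add, Matrix.toBlocks_fromBlocks₁₁] using this
  have e12 : abar * Bbarᵀ + bbar * cbarᵀ = s2ᵀ := by
    have := congrArg Matrix.toBlocks₁₂ hb22
    simpa [Matrix.fromBlocks_add, Matrix.toBlocks_fromBlocks₁₂] using this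
  have e22 : Bbar * Bbarᵀ + (cbar * cbarᵀ + Cbar * Cbarᵀ) = S22 := by
    have := congrArg Matrix.toBlocks₂₂ hb22
    simpa [Matrix.fromBlocks_add, Matrix.toBlocks_fromBlocks₂₂, add_assoc] using this
  -- Abar = A
  have hAeq : Abar = A :=
    chol_unique Abar A hAbtri hAbdiag hAtri hAdiag (hb11.trans hS11.symm)
  have huA : IsUnit A.det := (lt_det_triangular A hAtri hAdiag).ne'.isUnit
  have hub : IsUnit bbar.det := (lt_det_triangular bbar hbbtri hbbdiag).ne'.isUnit
  -- abar
  have habar : abar = (A⁻¹ * s1)ᵀ := by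
    rw [hAeq] at hb12a
    rw [← hb12a, ← Matrix.mul_assoc, Matrix.nonsing_inv_mul _ huA, Matrix.one_mul,
      Matrix.transpose_transpose]
  -- Bbar = B
  have hBeq : Bbar = B := by
    rw [hAeq] at hb12b
    have h := hb12b.trans hS12.symm
    have : Bbarᵀ = Bᵀ := by
      have := congrArg (fun M => A⁻¹ * M) h
      simpa [← Matrix.mul_assoc, Matrix.nonsing_inv_mul _ huA] using this
    calc Bbar = Bbarᵀᵀ := (Matrix.transpose_transpose _).symm
      _ = Bᵀᵀ := by rw [this]
      _ = B := Matrix.transpose_transpose _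
  -- bbar
  have hbbar : bbar * bbarᵀ = s0 - abar * abarᵀ := by
    rw [← e11]; abel
  -- cbar
  have hcbar : cbar = (bbar⁻¹ * (s2ᵀ - abar * Bᵀ))ᵀ := by
    rw [hBeq] at e12
    have h : bbar * cbarᵀ = s2ᵀ - abar * Bᵀ := by rw [← e12]; abel
    rw [← h, ← Matrix.mul_assoc, Matrix.nonsing_inv_mul _ hub, Matrix.one_mul,
      Matrix.transpose_transpose]
  -- Cbar
  have hCbar : Cbar * Cbarᵀ = C * Cᵀ - cbar * cbarᵀ := by
    rw [hBeq] at e22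
    have h := e22.trans hS22.symm
    have h2 : cbar * cbarᵀ + Cbar * Cbarᵀ = C * Cᵀ := by
      have := add_left_cancel h
      exact this
    linear_combination (norm := module) h2
  exact ⟨hAeq, hBeq, habar, hbbar, hcbar, hCbar⟩
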